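/- Let Θ₁,…,Θ_n ⊆ L_CPL be finite nonempty sets such that every formula in Θ₁ ∪ … ∪ Θ_n is a conjunction of propositional variables or a disjunction of propositional variables, any two formulas in the same Θ_i are comparable with respect to ⊨_CPL, and the variable sets Var[Θ_i] are pairwise disjoint. Let Υ = Θ₁ ∪ … ∪ Θ_n and let V be a finite set of variables containing Var[Υ]. Then for every ⊨_CPL-monotone function f : Υ → [0,1] there exists a probabilistic model M = ⟨2^V, μ⟩ such that μ(‖π‖_M) = f(π) for every π ∈ Υ. -/

import Mathlib

open scoped Classical

/-- Classical propositional formulas (the language `L_CPL`), built from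
propositional variables (indexed by `ℕ`) using ¬, ∧, ∨. -/
inductive CPL where
  | var : ℕ → CPL
  | neg : CPL → CPL
  | and : CPL → CPL → CPL
  | or : CPL → CPL → CPL
deriving DecidableEq

namespace CPL

/-- The set of propositional variables occurring in a formula. -/
def vars : CPL → Finset ℕ
  | var p => {p}
  | neg φ => vars φ
  | and φ χ => vars φ ∪ vars χ
  | or φ χ => vars φ ∪ vars χ

/-- Classical evaluation of a formula under a Boolean valuation. -/
def eval (v : ℕ → Bool) : CPL → Bool
  | var p => v p
  | neg φ => !eval v φ
  | and φ χ => eval v φ && eval v χ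
  | or φ χ => eval v φ || eval v χ

/-- Evaluation of a formula at a state given as a set of variables:
the variables in `X` are true, all others false. -/
def evalSet (X : Finset ℕ) (φ : CPL) : Bool := eval (fun p => decide (p ∈ X)) φ

/-- CPL-satisfiability. -/
def Satisfiable (φ : CPL) : Prop := ∃ v, eval v φ = true

/-- CPL-validity. -/
def Valid (φ : CPL) : Prop := ∀ v, eval v φ = true

/-- Classical entailment `φ ⊨_CPL χ`. -/
def Entails (φ χ : CPL) : Prop := ∀ v, eval v φ = true → eval v χ = true

/-- A literal: a variable or a negated variable. -/
def IsLiteral (φ : CPL) : Prop := (∃ p, φ = var p) ∨ ∃ p, φ = neg (var p)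

/-- An `L_CPL`-term: a conjunction of literals. -/
inductive IsTerm : CPL → Prop
  | lit {φ} : IsLiteral φ → IsTerm φ
  | conj {φ χ} : IsTerm φ → IsTerm χ → IsTerm (and φ χ)

/-- A conjunction of propositional variables. -/
inductive IsConjVars : CPL → Prop
  | var (p : ℕ) : IsConjVars (var p)
  | conj {φ χ} : IsConjVars φ → IsConjVars χ → IsConjVars (and φ χ)

/-- A disjunction of propositional variables. -/
inductive IsDisjVars : CPL → Prop
  | var (p : ℕ) : IsDisjVars (var p)
  | disj {φ χ} : IsDisjVars φ → IsDisjVars χ → IsDisjVars (or φ χ)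

/-- Variables occurring as positive literals (in a term). -/
def posVars : CPL → Finset ℕ
  | var p => {p}
  | neg _ => ∅
  | and φ χ => posVars φ ∪ posVars χ
  | or _ _ => ∅

/-- Variables occurring as negated literals (in a term). -/
def negVars : CPL → Finset ℕ
  | var _ => ∅
  | neg (var p) => {p}
  | neg _ => ∅
  | and φ χ => negVars φ ∪ negVars χ
  | or _ _ => ∅

/-- The literals occurring in a term. -/
def lits (φ : CPL) : Finset CPL :=
  (posVars φ).image var ∪ (negVars φ).image (fun p => neg (var p))

end CPL

/-- A state (possible world) over a finite set `V` of variables: a subset of `V`. -/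
abbrev World (V : Finset ℕ) := {X : Finset ℕ // X ⊆ V}

/-- A probabilistic model for `V`: a finitely additive probability measure
`μ : 2^(2^V) → [0,1]`. -/
structure ProbModel (V : Finset ℕ) where
  μ : Set (World V) → ℝ
  nonneg : ∀ A, 0 ≤ μ A
  le_one : ∀ A, μ A ≤ 1
  m_univ : μ Set.univ = 1
  m_empty : μ ∅ = 0
  m_add : ∀ A B : Set (World V), Disjoint A B → μ (A ∪ B) = μ A + μ B

/-- The truth set `‖φ‖_M` of a classical formula in a probabilistic model for `V`. -/
def truthSet (V : Finset ℕ) (φ : CPL) : Set (World V) :=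
  {w | CPL.evalSet w.1 φ = true}

/-- Comparison symbols ◇ ∈ {≤, <, >, ≥}. -/
inductive Ineq where
  | le | lt | gt | ge
deriving DecidableEq

/-- The relation denoted by a comparison symbol. -/
def Ineq.holds : Ineq → ℝ → ℝ → Prop
  | le, x, c => x ≤ c
  | lt, x, c => x < c
  | gt, x, c => x > c
  | ge, x, c => x ≥ c

/-- Formulas of the probabilistic language `L^Q_Pr`, built from probabilistic atoms
`Pr(φ)` and `Pr(φ)◇c̄` using ¬, △, ⊙, ⊕, →. -/
inductive FP where
  | prob : CPL → FP
  | probIneq : CPL → Ineq → ℚ → FP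
  | neg : FP → FP
  | delta : FP → FP
  | conj : FP → FP → FP
  | disj : FP → FP → FP
  | impl : FP → FP → FP
deriving DecidableEq

namespace FP

/-- Well-formedness: all rational constants lie in `[0,1] ∩ ℚ`. -/
def WF : FP → Prop
  | prob _ => True
  | probIneq _ _ c => 0 ≤ c ∧ c ≤ 1
  | neg α => WF α
  | delta α => WF α
  | conj α β => WF α ∧ WF β
  | disj α β => WF α ∧ WF β
  | impl α β => WF α ∧ WF β

/-- The variables of an `L^Q_Pr`-formula. -/
def vars : FP → Finset ℕ
  | prob φ => φ.vars
  | probIneq φ _ _ => φ.vars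
  | neg α => vars α
  | delta α => vars α
  | conj α β => vars α ∪ vars β
  | disj α β => vars α ∪ vars β
  | impl α β => vars α ∪ vars β

/-- The events `E(α)`: the classical formulas occurring in probabilistic atoms of `α`. -/
def events : FP → Finset CPL
  | prob φ => {φ}
  | probIneq φ _ _ => {φ}
  | neg α => events α
  | delta α => events α
  | conj α β => events α ∪ events β
  | disj α β => events α ∪ events β
  | impl α β => events α ∪ events β

/-- The FP-interpretation `I_M` induced by a probabilistic model `M`. -/
noncomputable def interp {V : Finset ℕ} (M : ProbModel V) : FP → ℝ
  | prob φ => M.μ (truthSet V φ)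
  | probIneq φ d c => if d.holds (M.μ (truthSet V φ)) (c : ℝ) then 1 else 0
  | neg α => 1 - interp M α
  | delta α => if interp M α = 1 then 1 else 0
  | conj α β => max 0 (interp M α + interp M β - 1)
  | disj α β => min 1 (interp M α + interp M β)
  | impl α β => min 1 (1 - interp M α + interp M β)

/-- `α` is FP-satisfiable: `I_M(α) = 1` in some probabilistic model for `Var(α)`. -/
def Satisfiable (α : FP) : Prop := ∃ M : ProbModel α.vars, interp M α = 1

/-- `α` is FP-valid: `I_M(α) = 1` in every probabilistic model for `Var(α)`. -/
def Valid (α : FP) : Prop := ∀ M : ProbModel α.vars, interp M α = 1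

/-- `α ⊨_FP β`: `I_M(β) = 1` in every probabilistic model for the variables of
`{α, β}` with `I_M(α) = 1`. -/
def Entails1 (α β : FP) : Prop :=
  ∀ M : ProbModel (α.vars ∪ β.vars), interp M α = 1 → interp M β = 1

/-- The variables of a finite set of `L^Q_Pr`-formulas. -/
def varsSet (Γ : Finset FP) : Finset ℕ := Γ.sup vars

/-- A finite set `Γ` is FP-satisfiable (`Γ ⊭_FP ⊥`): some probabilistic model for
the variables of `Γ` makes every member of `Γ` equal to `1`. -/
def SetSatisfiable (Γ : Finset FP) : Prop :=
  ∃ M : ProbModel (varsSet Γ), ∀ γ ∈ Γ, interp M γ = 1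

/-- `Γ ⊨_FP δ`: every probabilistic model for the variables of `Γ ∪ {δ}` satisfying
all of `Γ` satisfies `δ`. -/
def EntailsFin (Γ : Finset FP) (δ : FP) : Prop :=
  ∀ M : ProbModel (varsSet Γ ∪ δ.vars), (∀ γ ∈ Γ, interp M γ = 1) → interp M δ = 1

/-- `Γ ⊨^cons_FP δ`: `Γ ⊨_FP δ` and `Γ ⊭_FP ⊥`. -/
def ConsEntails (Γ : Finset FP) (δ : FP) : Prop :=
  EntailsFin Γ δ ∧ SetSatisfiable Γ

/-- The set of permitted values `V_Pr(Pr(φ)◇c̄)`. -/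
def permittedValues (φ : CPL) (d : Ineq) (c : ℚ) : Set ℝ :=
  {x | ∃ (V : Finset ℕ) (M : ProbModel V), φ.vars ⊆ V ∧
      interp M (probIneq φ d c) = 1 ∧ M.μ (truthSet V φ) = x}

end FP

/-- Formulas of the Łukasiewicz language `L^Q_Ł`, built from propositional variables
and truth-constant literals `p◇c̄` using ¬, △, ⊙, ⊕, →. -/
inductive Luk where
  | var : ℕ → Luk
  | ineq : ℕ → Ineq → ℚ → Luk
  | neg : Luk → Luk
  | delta : Luk → Luk
  | conj : Luk → Luk → Luk
  | disj : Luk → Luk → Luk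
  | impl : Luk → Luk → Luk
deriving DecidableEq

/-- An Ł-valuation: a function `Var → [0,1]`. -/
structure LukVal where
  v : ℕ → ℝ
  mem : ∀ p, v p ∈ Set.Icc (0 : ℝ) 1

/-- Extension of an Ł-valuation to all `L^Q_Ł`-formulas. -/
noncomputable def LukVal.eval (val : LukVal) : Luk → ℝ
  | .var p => val.v p
  | .ineq p d c => if d.holds (val.v p) (c : ℝ) then 1 else 0
  | .neg φ => 1 - val.eval φ
  | .delta φ => if val.eval φ = 1 then 1 else 0
  | .conj φ χ => max 0 (val.eval φ + val.eval χ - 1)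
  | .disj φ χ => min 1 (val.eval φ + val.eval χ)
  | .impl φ χ => min 1 (1 - val.eval φ + val.eval χ)

namespace Luk

/-- Well-formedness: all rational constants lie in `[0,1] ∩ ℚ`. -/
def WF : Luk → Prop
  | var _ => True
  | ineq _ _ c => 0 ≤ c ∧ c ≤ 1
  | neg φ => WF φ
  | delta φ => WF φ
  | conj φ χ => WF φ ∧ WF χ
  | disj φ χ => WF φ ∧ WF χ
  | impl φ χ => WF φ ∧ WF χ

/-- `Φ ⊨_Ł χ` for a finite set `Φ`. -/
def EntailsFin (Φ : Finset Luk) (χ : Luk) : Prop :=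
  ∀ val : LukVal, (∀ φ ∈ Φ, val.eval φ = 1) → val.eval χ = 1

/-- `φ` is Ł-valid. -/
def ValidL (φ : Luk) : Prop := ∀ val : LukVal, val.eval φ = 1

/-- A set of `L^Q_Ł`-formulas is Ł-satisfiable. -/
def SatisfiableSet (S : Set Luk) : Prop := ∃ val : LukVal, ∀ φ ∈ S, val.eval φ = 1

/-- The probabilistic counterpart `φ^Pr` of a Łukasiewicz formula. -/
def toFP : Luk → FP
  | var p => .prob (.var p)
  | ineq p d c => .probIneq (.var p) d c
  | neg φ => .neg (toFP φ)
  | delta φ => .delta (toFP φ)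
  | conj φ χ => .conj (toFP φ) (toFP χ)
  | disj φ χ => .disj (toFP φ) (toFP χ)
  | impl φ χ => .impl (toFP φ) (toFP χ)

end Luk

namespace FP

/-- The outer counterpart `α^↑` of an `L^Q_Pr`-formula, replacing each atom `Pr(φ)`
by the fresh variable `e φ` (and `Pr(φ)◇c̄` by `(e φ)◇c̄`). -/
def outer (e : CPL → ℕ) : FP → Luk
  | prob φ => .var (e φ)
  | probIneq φ d c => .ineq (e φ) d c
  | neg α => .neg (outer e α)
  | delta α => .delta (outer e α)
  | conj α β => .conj (outer e α) (outer e β)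
  | disj α β => .disj (outer e α) (outer e β)
  | impl α β => .impl (outer e α) (outer e β)

end FP

/-- The ⊙-conjunction of a (nonempty) list of `L^Q_Pr`-formulas. -/
def bigConjFP : List FP → FP
  | [] => .probIneq (.var 0) .ge 0
  | a :: t => t.foldl .conj a

/-- The ∨-disjunction of a (nonempty) list of classical formulas. -/
def bigDisjCPL : List CPL → CPL
  | [] => .var 0
  | a :: t => t.foldl .or a

/-- The PIT `⊙_i Pr(τ_i)≤c̄_i ⊙ ⊙_i Pr(τ_i)≥c̄_i` associated with the list of
pairs `(τ_i, c_i)`. -/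
def completePITFormula (L : List (CPL × ℚ)) : FP :=
  bigConjFP (L.map (fun t => FP.probIneq t.1 .le t.2) ++
             L.map (fun t => FP.probIneq t.1 .ge t.2))

/-- `τ` is an `L_CPL`-term containing, for every `p ∈ V`, exactly one of the
literals `p` and `¬p` (and no other variables). -/
def IsCompleteTermOver (V : Finset ℕ) (τ : CPL) : Prop :=
  CPL.IsTerm τ ∧ τ.vars ⊆ V ∧ ∀ p ∈ V, (p ∈ τ.posVars ↔ p ∉ τ.negVars)

/-- Membership in `𝒱 = {0, 1/n, …, (n−1)/n, 1}`. -/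
def memVSet (n : ℕ) (c : ℚ) : Prop := ∃ k : ℕ, k ≤ n ∧ c = (k : ℚ) / (n : ℚ)

/-- The data `(τ_i, c_i)` of a `⟨V,𝒱⟩`-complete PIT (with `𝒱` given by `n`). -/
def IsCompletePIT (V : Finset ℕ) (n : ℕ) (L : List (CPL × ℚ)) : Prop :=
  (L.map Prod.fst).Nodup ∧
  (∀ t ∈ L, IsCompleteTermOver V t.1 ∧ memVSet n t.2) ∧
  (L.map Prod.snd).sum = 1

/-- A measure is coherent with a value assignment `pr` on the events `E`. -/
def coherent {V : Finset ℕ} (M : ProbModel V) (E : Finset CPL) (pr : CPL → ℚ) : Prop :=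
  ∀ ψ ∈ E, M.μ (truthSet V ψ) = (pr ψ : ℝ)

/-- Conditional probability `Pr_μ(φ | χ) = μ(‖φ∧χ‖)/μ(‖χ‖)`. -/
noncomputable def condProb {V : Finset ℕ} (M : ProbModel V) (φ χ : CPL) : ℝ :=
  M.μ (truthSet V (CPL.and φ χ)) / M.μ (truthSet V χ)

/-- `τ` is a solution to the PrAP `⟨{φ}, χ, H, E, pr⟩`: an `L_CPL`-term composed of
literals from `H` s.t. `φ, τ ⊨_CPL χ` and some probabilistic model coherent with `pr`
gives `μ(‖φ∧τ‖) > 0`. -/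
def IsPrAPSolution (φ χ : CPL) (H E : Finset CPL) (pr : CPL → ℚ) (τ : CPL) : Prop :=
  CPL.IsTerm τ ∧ τ.lits ⊆ H ∧
  (∀ v, CPL.eval v φ = true → CPL.eval v τ = true → CPL.eval v χ = true) ∧
  ∃ M : ProbModel (φ.vars ∪ χ.vars),
    coherent M E pr ∧ 0 < M.μ (truthSet (φ.vars ∪ χ.vars) (CPL.and φ τ))

/-- `τ` is a preferred solution: a solution s.t. for every other solution `σ` there is
a probabilistic model coherent with `pr` with `μ(‖τ‖) ≥ μ(‖σ‖)`. -/
def IsPreferredPrAPSolution (φ χ : CPL) (H E : Finset CPL) (pr : CPL → ℚ) (τ : CPL) : Prop :=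
  IsPrAPSolution φ χ H E pr τ ∧
  ∀ σ, IsPrAPSolution φ χ H E pr σ → σ ≠ τ →
    ∃ M : ProbModel (φ.vars ∪ χ.vars),
      coherent M E pr ∧
      M.μ (truthSet (φ.vars ∪ χ.vars) σ) ≤ M.μ (truthSet (φ.vars ∪ χ.vars) τ)

/-- The FP-counterpart `Ξ_p = {Pr(ψ)≈c̄ : ψ ∈ E, p(ψ) = c}` of a value assignment,
where `Pr(ψ)≈c̄` abbreviates `(Pr(ψ)≥c̄) ⊙ (Pr(ψ)≤c̄)`. -/
def XiP (E : Finset CPL) (pr : CPL → ℚ) : Finset FP :=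
  E.image (fun ψ => FP.conj (FP.probIneq ψ .ge (pr ψ)) (FP.probIneq ψ .le (pr ψ)))

/-- The next weakest PIL `λ^♭_𝒱` of the PIL `Pr(τ)◇(k/n)`. -/
def flatPIL (n : ℕ) (τ : CPL) (d : Ineq) (k : ℕ) : FP :=
  match d with
  | .ge => FP.probIneq τ .gt (((k : ℚ) - 1) / (n : ℚ))
  | .gt => FP.probIneq τ .ge ((k : ℚ) / (n : ℚ))
  | .le => FP.probIneq τ .lt (((k : ℚ) + 1) / (n : ℚ))
  | .lt => FP.probIneq τ .le ((k : ℚ) / (n : ℚ))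

/-- The theory `Ψ_Γ = Γ^↑ ∪ {p_φ → p_χ : φ, χ ∈ E[Γ], φ ⊨_CPL χ}`. -/
def PsiGamma (Γ : Finset FP) (e : CPL → ℕ) : Set Luk :=
  (fun α => FP.outer e α) '' (↑Γ : Set FP) ∪
  {ψ | ∃ φ ∈ Γ.sup FP.events, ∃ χ ∈ Γ.sup FP.events,
        CPL.Entails φ χ ∧ ψ = Luk.impl (.var (e φ)) (.var (e χ))}

/-- The conjunction `hd ∧ ⋀_{q ∈ s} q`. -/
def conjVarsFrom (hd : CPL) (s : Finset ℕ) : CPL :=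
  (s.sort (· ≤ ·)).foldl (fun acc q => CPL.and acc (CPL.var q)) hd
namespace Aux7
open CPL

lemma eval_congr (φ : CPL) (v w : ℕ → Bool) (h : ∀ p ∈ φ.vars, v p = w p) :
    eval v φ = eval w φ := by
  induction φ with
  | var p => exact h p (by simp [vars])
  | neg φ ih => simp only [eval]; rw [ih (fun p hp => h p (by simp [vars, hp]))]
  | and φ χ ih1 ih2 =>
      simp only [eval]
      rw [ih1 (fun p hp => h p (by simp [vars, hp])),
          ih2 (fun p hp => h p (by simp [vars, hp]))]
  | or φ χ ih1 ih2 =>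
      simp only [eval]
      rw [ih1 (fun p hp => h p (by simp [vars, hp])),
          ih2 (fun p hp => h p (by simp [vars, hp]))]

lemma conj_eval {φ : CPL} (h : IsConjVars φ) (v : ℕ → Bool) :
    eval v φ = true ↔ ∀ p ∈ φ.vars, v p = true := by
  induction h with
  | var p => simp [eval, vars]
  | conj h1 h2 ih1 ih2 =>
      simp only [eval, vars, Bool.and_eq_true, ih1, ih2, Finset.mem_union]
      constructor
      · rintro ⟨a, b⟩ p (hp | hp); exacts [a p hp, b p hp]
      · intro h; exact ⟨fun p hp => h p (Or.inl hp), fun p hp => h p (Or.inr hp)⟩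

lemma disj_eval {φ : CPL} (h : IsDisjVars φ) (v : ℕ → Bool) :
    eval v φ = true ↔ ∃ p ∈ φ.vars, v p = true := by
  induction h with
  | var p => simp [eval, vars]
  | disj h1 h2 ih1 ih2 =>
      simp only [eval, vars, Bool.or_eq_true, ih1, ih2, Finset.mem_union]
      constructor
      · rintro (⟨p, hp, hv⟩ | ⟨p, hp, hv⟩)
        exacts [⟨p, Or.inl hp, hv⟩, ⟨p, Or.inr hp, hv⟩]
      · rintro ⟨p, (hp | hp), hv⟩
        exacts [Or.inl ⟨p, hp, hv⟩, Or.inr ⟨p, hp, hv⟩]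

lemma vars_nonempty {φ : CPL} (h : IsConjVars φ ∨ IsDisjVars φ) : φ.vars.Nonempty := by
  rcases h with h | h
  · induction h with
    | var p => exact ⟨p, by simp [vars]⟩
    | conj h1 h2 ih1 ih2 => exact ih1.mono (by simp [vars, Finset.subset_union_left])
  · induction h with
    | var p => exact ⟨p, by simp [vars]⟩
    | disj h1 h2 ih1 ih2 => exact ih1.mono (by simp [vars, Finset.subset_union_left])

lemma pos_mono {φ : CPL} (h : IsConjVars φ ∨ IsDisjVars φ) (v w : ℕ → Bool)
    (hvw : ∀ p, v p = true → w p = true) (hv : eval v φ = true) : eval w φ = true := by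
  rcases h with h | h
  · rw [conj_eval h] at hv ⊢; exact fun p hp => hvw p (hv p hp)
  · rw [disj_eval h] at hv ⊢; obtain ⟨p, hp, h1⟩ := hv; exact ⟨p, hp, hvw p h1⟩

lemma pos_false_empty {φ : CPL} (h : IsConjVars φ ∨ IsDisjVars φ) (v : ℕ → Bool)
    (hv : ∀ p, v p = false) : ¬ eval v φ = true := by
  intro he
  obtain ⟨p, hp⟩ := vars_nonempty h
  rcases h with h | h
  · rw [conj_eval h] at he; have := he p hp; simp [hv p] at this
  · rw [disj_eval h] at he; obtain ⟨q, _, hq⟩ := he; simp [hv q] at hq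

lemma exists_min {α : Type*} (r : α → α → Prop) (htrans : ∀ a b c, r a b → r b c → r a c)
    (hrefl : ∀ a, r a a) :
    ∀ s : Finset α, s.Nonempty → (∀ a ∈ s, ∀ b ∈ s, r a b ∨ r b a) →
      ∃ m ∈ s, ∀ a ∈ s, r m a := by
  intro s
  induction s using Finset.induction_on with
  | empty => intro h; simp at h
  | insert _ _ hx ih =>
      rename_i a t
      intro _ htot
      rcases t.eq_empty_or_nonempty with rfl | hne
      · exact ⟨a, by simp, by simp [hrefl]⟩
      · obtain ⟨m, hm, hmin⟩ := ih hne (fun x hx y hy =>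
          htot x (Finset.mem_insert_of_mem hx) y (Finset.mem_insert_of_mem hy))
        rcases htot a (Finset.mem_insert_self a t) m (Finset.mem_insert_of_mem hm) with h | h
        · refine ⟨a, Finset.mem_insert_self a t, ?_⟩
          intro b hb
          rcases Finset.mem_insert.1 hb with rfl | hb
          · exact hrefl b
          · exact htrans _ _ _ h (hmin b hb)
        · refine ⟨m, Finset.mem_insert_of_mem hm, ?_⟩
          intro b hb
          rcases Finset.mem_insert.1 hb with rfl | hb
          · exact h
          · exact hmin b hb

end Aux7

namespace Aux7
open CPL

lemma entails_trans : ∀ a b c : CPL, Entails a b → Entails b c → Entails a c :=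
  fun _ _ _ h1 h2 v hv => h2 v (h1 v hv)

lemma entails_refl : ∀ a : CPL, Entails a a := fun _ _ h => h

lemma block (f : CPL → ℝ) (Θb : Finset CPL) (c : ℝ)
    (hform : ∀ π ∈ Θb, IsConjVars π ∨ IsDisjVars π)
    (hchain : ∀ π ∈ Θb, ∀ ρ ∈ Θb, Entails π ρ ∨ Entails ρ π)
    (hmono : ∀ π ∈ Θb, ∀ ρ ∈ Θb, Entails π ρ → f π ≤ f ρ) :
    ∃ X : Finset ℕ, X ⊆ Θb.sup vars ∧ ∀ π ∈ Θb, (evalSet X π = true ↔ c ≤ f π) := by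
  classical
  set S : Finset CPL := Θb.filter (fun π => c ≤ f π) with hS
  rcases S.eq_empty_or_nonempty with hSe | hSne
  · -- no formula should be true: X = ∅
    refine ⟨∅, Finset.empty_subset _, fun π hπ => ?_⟩
    have hfc : ¬ c ≤ f π := by
      intro h
      have : π ∈ S := Finset.mem_filter.2 ⟨hπ, h⟩
      simp [hSe] at this
    have : ¬ evalSet ∅ π = true :=
      pos_false_empty (hform π hπ) _ (fun p => by simp)
    simp [this, hfc]
  · -- ρ0 : minimum of S under Entails
    obtain ⟨ρ0, hρ0S, hρ0min⟩ := exists_min Entails entails_trans entails_refl S hSne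
      (fun a ha b hb => hchain a (Finset.mem_filter.1 ha).1 b (Finset.mem_filter.1 hb).1)
    have hρ0Θ : ρ0 ∈ Θb := (Finset.mem_filter.1 hρ0S).1
    have hρ0c : c ≤ f ρ0 := (Finset.mem_filter.1 hρ0S).2
    -- key: given X with ρ0 true at X and all "T" formulas false at X we are done
    have main : ∀ X : Finset ℕ, evalSet X ρ0 = true →
        (∀ π ∈ Θb, ¬ c ≤ f π → ¬ evalSet X π = true) →
        ∀ π ∈ Θb, (evalSet X π = true ↔ c ≤ f π) := by
      intro X hX hT π hπ
      by_cases hfc : c ≤ f π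
      · have hπS : π ∈ S := Finset.mem_filter.2 ⟨hπ, hfc⟩
        have := hρ0min π hπS _ hX
        simp only [evalSet]
        simp [this, hfc]
      · simp [hT π hπ hfc, hfc]
    rcases hform ρ0 hρ0Θ with hc | hd
    · -- ρ0 conjunction of vars : X = ρ0.vars
      refine ⟨ρ0.vars, Finset.le_sup hρ0Θ, main ρ0.vars ?_ ?_⟩
      · simp only [evalSet]; rw [conj_eval hc]; intro p hp; simp [hp]
      · intro π hπ hfc htrue
        have hent : Entails ρ0 π := by
          intro v hv
          rw [conj_eval hc] at hv
          exact pos_mono (hform π hπ) _ v (fun p hp => hv p (by simpa using hp)) htrue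
        exact hfc (le_trans hρ0c (hmono ρ0 hρ0Θ π hπ hent))
    · -- ρ0 disjunction of vars
      have key : ∃ p ∈ ρ0.vars, ∀ π ∈ Θb, ¬ c ≤ f π → ¬ evalSet {p} π = true := by
        by_contra hno
        push_neg at hno
        set T : Finset CPL := Θb.filter (fun π => ¬ c ≤ f π) with hT
        have hTne : T.Nonempty := by
          obtain ⟨p, hp⟩ := vars_nonempty (Or.inr hd)
          obtain ⟨π, hπ, hfc, _⟩ := hno p hp
          exact ⟨π, Finset.mem_filter.2 ⟨hπ, not_le.2 hfc⟩⟩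
        obtain ⟨π', hπ'T, hπ'max⟩ := exists_min (fun a b => Entails b a)
          (fun a b c h1 h2 => entails_trans c b a h2 h1) entails_refl T hTne
          (fun a ha b hb => (hchain b (Finset.mem_filter.1 hb).1 a
            (Finset.mem_filter.1 ha).1))
        have hπ'Θ : π' ∈ Θb := (Finset.mem_filter.1 hπ'T).1
        have hπ'c : ¬ c ≤ f π' := (Finset.mem_filter.1 hπ'T).2
        have hstar : ∀ p ∈ ρ0.vars, evalSet {p} π' = true := by
          intro p hp
          obtain ⟨π, hπ, hfc, htrue⟩ := hno p hp
          exact hπ'max π (Finset.mem_filter.2 ⟨hπ, not_le.2 hfc⟩) _ htrue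
        have hent : Entails ρ0 π' := by
          intro v hv
          rw [disj_eval hd] at hv
          obtain ⟨p, hp, hvp⟩ := hv
          refine pos_mono (hform π' hπ'Θ) _ v ?_ (hstar p hp)
          intro q hq
          have : q = p := by simpa using hq
          subst this; exact hvp
        exact hπ'c (le_trans hρ0c (hmono ρ0 hρ0Θ π' hπ'Θ hent))
      obtain ⟨p, hp, hgood⟩ := key
      refine ⟨{p}, ?_, main {p} ?_ hgood⟩
      · intro q hq
        have : q = p := by simpa using hq
        subst this
        exact Finset.mem_of_subset (Finset.le_sup hρ0Θ) hp
      · simp only [evalSet]; rw [disj_eval hd]; exact ⟨p, hp, by simp⟩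

end Aux7

namespace Aux7
open CPL MeasureTheory

lemma global (n : ℕ) (Θ : Fin n → Finset CPL)
    (hform : ∀ i, ∀ π ∈ Θ i, CPL.IsConjVars π ∨ CPL.IsDisjVars π)
    (hchain : ∀ i, ∀ π ∈ Θ i, ∀ ρ ∈ Θ i, CPL.Entails π ρ ∨ CPL.Entails ρ π)
    (hdisj : ∀ i j, i ≠ j → Disjoint ((Θ i).sup CPL.vars) ((Θ j).sup CPL.vars))
    (V : Finset ℕ) (hV : (Finset.univ.sup Θ).sup CPL.vars ⊆ V)
    (f : CPL → ℝ)
    (hmono : ∀ π ∈ Finset.univ.sup Θ, ∀ ρ ∈ Finset.univ.sup Θ,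
      CPL.Entails π ρ → f π ≤ f ρ) (c : ℝ) :
    ∃ X : Finset ℕ, X ⊆ V ∧ ∀ π ∈ Finset.univ.sup Θ, (evalSet X π = true ↔ c ≤ f π) := by
  classical
  have hsubΥ : ∀ i, Θ i ⊆ Finset.univ.sup Θ := fun i =>
    Finset.le_sup (Finset.mem_univ i)
  choose Xc hXsub hXc using fun i : Fin n =>
    block f (Θ i) c (hform i) (hchain i)
      (fun π hπ ρ hρ h => hmono π (hsubΥ i hπ) ρ (hsubΥ i hρ) h)
  refine ⟨Finset.univ.sup Xc, ?_, ?_⟩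
  · refine Finset.sup_le fun i _ => (hXsub i).trans ?_
    exact (Finset.sup_mono (hsubΥ i)).trans hV
  · intro π hπ
    obtain ⟨i, _, hπi⟩ := Finset.mem_sup.1 hπ
    have hvars : π.vars ⊆ (Θ i).sup vars := Finset.le_sup hπi
    have : evalSet (Finset.univ.sup Xc) π = evalSet (Xc i) π := by
      apply eval_congr
      intro p hp
      have hpi : p ∈ (Θ i).sup vars := hvars hp
      have : p ∈ Finset.univ.sup Xc ↔ p ∈ Xc i := by
        constructor
        · intro hpX
          obtain ⟨j, _, hpj⟩ := Finset.mem_sup.1 hpX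
          by_cases hij : j = i
          · exact hij ▸ hpj
          · exact absurd hpi (Finset.disjoint_left.1 (hdisj j i hij) (hXsub j hpj))
        · intro h; exact Finset.mem_sup.2 ⟨i, Finset.mem_univ i, h⟩
      simp [this]
    rw [this]
    exact hXc i π hπi

end Aux7


/-- Monotone assignments on chained positive sets extend to probabilistic
models: if `Υ = Θ₁ ∪ … ∪ Θ_n` with each formula a conjunction or disjunction of
variables, formulas in each `Θ_i` pairwise `⊨_CPL`-comparable, the variable sets of the
`Θ_i` pairwise disjoint, and `V ⊇ Var[Υ]`, then every `⊨_CPL`-monotone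
`f : Υ → [0,1]` is realised by some probabilistic model `M = ⟨2^V, μ⟩`
via `μ(‖π‖_M) = f(π)`. -/
theorem stmt7 (n : ℕ) (Θ : Fin n → Finset CPL)
    (hne : ∀ i, (Θ i).Nonempty)
    (hform : ∀ i, ∀ π ∈ Θ i, CPL.IsConjVars π ∨ CPL.IsDisjVars π)
    (hchain : ∀ i, ∀ π ∈ Θ i, ∀ ρ ∈ Θ i, CPL.Entails π ρ ∨ CPL.Entails ρ π)
    (hdisj : ∀ i j, i ≠ j → Disjoint ((Θ i).sup CPL.vars) ((Θ j).sup CPL.vars))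
    (V : Finset ℕ) (hV : (Finset.univ.sup Θ).sup CPL.vars ⊆ V)
    (f : CPL → ℝ)
    (hrange : ∀ π ∈ Finset.univ.sup Θ, f π ∈ Set.Icc (0 : ℝ) 1)
    (hmono : ∀ π ∈ Finset.univ.sup Θ, ∀ ρ ∈ Finset.univ.sup Θ,
      CPL.Entails π ρ → f π ≤ f ρ) :
    ∃ M : ProbModel V, ∀ π ∈ Finset.univ.sup Θ, M.μ (truthSet V π) = f π := by
  classical
  obtain ⟨W, hW1, hW2⟩ : ∃ W : ℝ → World V,
      (∀ t : ℝ, ∀ π ∈ Finset.univ.sup Θ, (CPL.evalSet (W t).1 π = true ↔ t ≤ f π)) ∧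
      (∀ t s : ℝ,
        (Finset.univ.sup Θ).filter (fun π => t ≤ f π) =
          (Finset.univ.sup Θ).filter (fun π => s ≤ f π) → W t = W s) := by
    have hch : ∀ S0 : Finset CPL, ∃ Y : World V,
        (∃ X : Finset ℕ, X ⊆ V ∧
            ∀ π ∈ Finset.univ.sup Θ, (CPL.evalSet X π = true ↔ π ∈ S0)) →
        ∀ π ∈ Finset.univ.sup Θ, (CPL.evalSet Y.1 π = true ↔ π ∈ S0) := by
      intro S0
      by_cases h : ∃ X : Finset ℕ, X ⊆ V ∧
          ∀ π ∈ Finset.univ.sup Θ, (CPL.evalSet X π = true ↔ π ∈ S0)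
      · obtain ⟨X, hXV, hX⟩ := h
        exact ⟨⟨X, hXV⟩, fun _ => hX⟩
      · exact ⟨⟨∅, Finset.empty_subset V⟩, fun hx => absurd hx h⟩
    choose wo hwo using hch
    refine ⟨fun t => wo ((Finset.univ.sup Θ).filter (fun π => t ≤ f π)), ?_,
      fun t s h => by simp only [h]⟩
    intro t π hπ
    obtain ⟨X, hXV, hX⟩ := Aux7.global n Θ hform hchain hdisj V hV f hmono t
    have := hwo ((Finset.univ.sup Θ).filter (fun π => t ≤ f π))
      ⟨X, hXV, fun ρ hρ => by rw [hX ρ hρ]; simp [Finset.mem_filter, hρ]⟩ π hπ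
    rw [this]
    simp [Finset.mem_filter, hπ]
  -- fibers of the cut map are measurable
  have hfiber : ∀ S0 ∈ (Finset.univ.sup Θ).powerset,
      MeasurableSet {t : ℝ | (Finset.univ.sup Θ).filter (fun π => t ≤ f π) = S0} := by
    intro S0 hS0
    have hS0' : S0 ⊆ Finset.univ.sup Θ := Finset.mem_powerset.1 hS0
    have heq : {t : ℝ | (Finset.univ.sup Θ).filter (fun π => t ≤ f π) = S0} =
        ⋂ π ∈ Finset.univ.sup Θ,
          (if π ∈ S0 then Set.Iic (f π) else (Set.Iic (f π))ᶜ) := by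
      ext t
      simp only [Set.mem_setOf_eq, Set.mem_iInter]
      constructor
      · intro h π hπ
        by_cases hπS : π ∈ S0
        · have hmem : π ∈ (Finset.univ.sup Θ).filter (fun π => t ≤ f π) := by
            rw [h]; exact hπS
          simp only [if_pos hπS, Set.mem_Iic]
          exact (Finset.mem_filter.1 hmem).2
        · simp only [if_neg hπS, Set.mem_compl_iff, Set.mem_Iic]
          intro hle
          exact hπS (h ▸ Finset.mem_filter.2 ⟨hπ, hle⟩)
      · intro h
        ext π
        simp only [Finset.mem_filter]
        constructor
        · rintro ⟨hπ, hle⟩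
          have := h π hπ
          by_cases hπS : π ∈ S0
          · exact hπS
          · simp only [if_neg hπS, Set.mem_compl_iff, Set.mem_Iic] at this
            exact absurd hle this
        · intro hπS
          have hπ : π ∈ Finset.univ.sup Θ := hS0' hπS
          have := h π hπ
          simp only [if_pos hπS, Set.mem_Iic] at this
          exact ⟨hπ, this⟩
    rw [heq]
    refine Set.Finite.measurableSet_biInter (Finset.univ.sup Θ).finite_toSet
      fun π _ => ?_
    by_cases hπS : π ∈ S0
    · simp only [if_pos hπS]; exact measurableSet_Iic
    · simp only [if_neg hπS]; exact measurableSet_Iic.compl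
  have hmeas : ∀ A : Set (World V), MeasurableSet (W ⁻¹' A) := by
    intro A
    have heq : W ⁻¹' A = ⋃ S0 ∈ (Finset.univ.sup Θ).powerset.filter
        (fun S0 => ∃ s : ℝ,
          (Finset.univ.sup Θ).filter (fun π => s ≤ f π) = S0 ∧ W s ∈ A),
        {t : ℝ | (Finset.univ.sup Θ).filter (fun π => t ≤ f π) = S0} := by
      ext t
      simp only [Set.mem_preimage, Set.mem_iUnion, Set.mem_setOf_eq,
        Finset.mem_filter, Finset.mem_powerset, exists_prop]
      constructor
      · intro h
        exact ⟨(Finset.univ.sup Θ).filter (fun π => t ≤ f π),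
          ⟨Finset.filter_subset _ _, ⟨t, rfl, h⟩⟩, rfl⟩
      · rintro ⟨S0, ⟨_, ⟨s, hs, hsA⟩⟩, ht⟩
        have : W t = W s := hW2 t s (by rw [ht, hs])
        rw [this]
        exact hsA
    rw [heq]
    exact Finset.measurableSet_biUnion _ fun S0 hS0 =>
      hfiber S0 (Finset.mem_filter.1 hS0).1
  have hfin : ∀ s : Set ℝ, MeasureTheory.volume (s ∩ Set.Ioc (0:ℝ) 1) ≠ ⊤ := fun s =>
    ((MeasureTheory.measure_mono Set.inter_subset_right).trans_lt
      (by simp [Real.volume_Ioc])).ne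
  have hle1 : ∀ s : Set ℝ, MeasureTheory.volume (s ∩ Set.Ioc (0:ℝ) 1) ≤ 1 := fun s => by
    have h := MeasureTheory.measure_mono (μ := MeasureTheory.volume)
      (Set.inter_subset_right (s := s) (t := Set.Ioc (0:ℝ) 1))
    simpa [Real.volume_Ioc] using h
  refine ⟨⟨fun A => (MeasureTheory.volume ((W ⁻¹' A) ∩ Set.Ioc (0:ℝ) 1)).toReal,
      fun A => ENNReal.toReal_nonneg, ?_, ?_, ?_, ?_⟩, ?_⟩
  · intro A
    calc (MeasureTheory.volume ((W ⁻¹' A) ∩ Set.Ioc (0:ℝ) 1)).toReal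
        ≤ (1 : ENNReal).toReal := ENNReal.toReal_mono (by simp) (hle1 (W ⁻¹' A))
      _ = 1 := by simp
  · simp [Real.volume_Ioc]
  · simp
  · intro A B hAB
    have hd : Disjoint ((W ⁻¹' A) ∩ Set.Ioc (0:ℝ) 1)
        ((W ⁻¹' B) ∩ Set.Ioc (0:ℝ) 1) :=
      (hAB.preimage W).mono Set.inter_subset_left Set.inter_subset_left
    have hu : (W ⁻¹' (A ∪ B)) ∩ Set.Ioc (0:ℝ) 1 =
        ((W ⁻¹' A) ∩ Set.Ioc (0:ℝ) 1) ∪ ((W ⁻¹' B) ∩ Set.Ioc (0:ℝ) 1) := by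
      rw [Set.preimage_union, Set.union_inter_distrib_right]
    simp only [hu]
    rw [MeasureTheory.measure_union hd ((hmeas B).inter measurableSet_Ioc),
      ENNReal.toReal_add (hfin _) (hfin _)]
  · intro π hπ
    have hfr := hrange π hπ
    have heq : (W ⁻¹' (truthSet V π)) ∩ Set.Ioc (0:ℝ) 1 = Set.Ioc 0 (f π) := by
      ext t
      simp only [Set.mem_inter_iff, Set.mem_preimage, truthSet, Set.mem_setOf_eq,
        Set.mem_Ioc]
      constructor
      · rintro ⟨hev, h0, h1⟩
        exact ⟨h0, (hW1 t π hπ).1 hev⟩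
      · rintro ⟨h0, hf⟩
        exact ⟨(hW1 t π hπ).2 hf, h0, hf.trans hfr.2⟩
    simp only [heq]
    rw [Real.volume_Ioc]
    rw [sub_zero, ENNReal.toReal_ofReal hfr.1]
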